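/- (Representation formula I, continuous case.) Let p be a probability density on ℝ (with respect to Lebesgue measure) whose set of positivity is an open interval S = (a, b) (a, b ∈ ℝ ∪ {−∞, +∞}), and let X have density p. Let η : ℝ → ℝ satisfy E|η(X)| < ∞ and E[η(X)] = 0, and define f(x) = (1/p(x)) ∫_a^x η(u) p(u) du for x ∈ S. Then: (i) the function x ↦ f(x) p(x) is locally absolutely continuous on S with derivative (f p)'(x) = η(x) p(x) for a.e. x ∈ S, so that the canonical Stein operator satisfies T_p f(x) := (f p)'(x)/p(x) = η(x) for a.e. x ∈ S; (ii) f(x) p(x) → 0 as x → a⁺ and as x → b⁻, and E[T_p f(X)] = 0. -/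

import Mathlib

open MeasureTheory Set Filter

section
open Metric in

lemma ae_hasDerivAt_primitive (g : ℝ → ℝ) (hg : Integrable g) :
    ∀ᵐ x : ℝ, HasDerivAt (fun y => ∫ t in Iio y, g t) (g x) x := by
  have hFF : ∀ u v : ℝ, (∫ t in Iio v, g t) - (∫ t in Iio u, g t) = ∫ t in u..v, g t := by
    intro u v
    rw [← integral_Iic_eq_integral_Iio, ← integral_Iic_eq_integral_Iio]
    exact intervalIntegral.integral_Iic_sub_Iic hg.integrableOn hg.integrableOn
  filter_upwards [IsUnifLocDoublingMeasure.ae_tendsto_average_norm_sub _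
    (hg.locallyIntegrable) 1] with x hx
  rw [hasDerivAt_iff_tendsto_slope]
  have hball : ∀ y : ℝ, closedBall ((x + y) / 2) (|y - x| / 2) = Icc (min x y) (max x y) := by
    intro y
    rw [Real.closedBall_eq_Icc]
    rcases le_total x y with h | h
    · rw [abs_of_nonneg (by linarith), min_eq_left h, max_eq_right h]
      congr 1 <;> ring
    · rw [abs_of_nonpos (by linarith), min_eq_right h, max_eq_left h]
      congr 1 <;> ring
  have key : Tendsto (fun y => ⨍ t in Icc (min x y) (max x y), ‖g t - g x‖)
      (nhdsWithin x {x}ᶜ) (nhds 0) := by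
    have := hx (l := nhdsWithin x {x}ᶜ) (fun y => (x + y) / 2) (fun y => |y - x| / 2) ?_ ?_
    · refine this.congr fun y => by rw [hball]
    · apply tendsto_nhdsWithin_of_tendsto_nhds_of_eventually_within
      · have h1 : Tendsto (fun y : ℝ => |y - x| / 2) (nhds x) (nhds (|x - x| / 2)) := by
          exact (((continuous_id.sub continuous_const).abs.div_const 2).tendsto x)
        simpa using h1.mono_left nhdsWithin_le_nhds
      · filter_upwards [self_mem_nhdsWithin] with y hy
        have : y ≠ x := hy
        have : |y - x| > 0 := abs_pos.mpr (sub_ne_zero.mpr this)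
        exact div_pos this two_pos
    · filter_upwards with y
      rw [mem_closedBall, one_mul, Real.dist_eq]
      rw [abs_le]
      constructor <;> [skip; skip] <;> rcases le_total x y with h | h <;>
        simp [abs_of_nonneg, abs_of_nonpos, h, sub_nonneg.mpr h, sub_nonpos.mpr h] <;> linarith [abs_nonneg (y - x)]
  -- squeeze
  have hbound : ∀ y : ℝ, y ≠ x →
      ‖slope (fun y => ∫ t in Iio y, g t) x y - g x‖ ≤
        ⨍ t in Icc (min x y) (max x y), ‖g t - g x‖ := by
    intro y hy
    have hyx : y - x ≠ 0 := sub_ne_zero.mpr hy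
    have hslope : slope (fun y => ∫ t in Iio y, g t) x y - g x
        = (∫ t in x..y, (g t - g x)) / (y - x) := by
      rw [slope_def_field, hFF x y]
      rw [intervalIntegral.integral_sub (hg.intervalIntegrable)
        (intervalIntegrable_const)]
      rw [intervalIntegral.integral_const]
      field_simp
      rw [smul_eq_mul]
    rw [hslope]
    have h1 : ‖(∫ t in x..y, (g t - g x)) / (y - x)‖
        = ‖∫ t in x..y, (g t - g x)‖ / |y - x| := by
      rw [norm_div]; rfl
    rw [h1]
    have h2 : ‖∫ t in x..y, (g t - g x)‖ ≤ ∫ t in uIoc x y, ‖g t - g x‖ :=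
      intervalIntegral.norm_integral_le_integral_norm_uIoc
    have h3 : (∫ t in uIoc x y, ‖g t - g x‖) = ∫ t in Icc (min x y) (max x y), ‖g t - g x‖ := by
      rw [uIoc, ← integral_Icc_eq_integral_Ioc]
    have h4 : (volume (Icc (min x y) (max x y))).toReal = |y - x| := by
      rw [Real.volume_Icc, ENNReal.toReal_ofReal (by rcases le_total x y with h|h <;> simp [h])]
      rcases le_total x y with h | h <;>
        simp [min_eq_left, min_eq_right, max_eq_left, max_eq_right, h,
          abs_of_nonneg, abs_of_nonpos, sub_nonneg.mpr h, sub_nonpos.mpr h]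
    rw [setAverage_eq, smul_eq_mul, ← h3, measureReal_def, h4]
    rw [div_eq_inv_mul]
    exact mul_le_mul_of_nonneg_left h2 (by positivity)
  rw [tendsto_iff_norm_sub_tendsto_zero]
  apply squeeze_zero' (Eventually.of_forall fun y => norm_nonneg _)
    (by filter_upwards [self_mem_nhdsWithin] with y hy; exact hbound y hy) key

end

/-- Representation formula I, continuous case: if `p` is a probability density that is
positive exactly on the open interval `S = (a,b)` and `η` is a `p`-mean-zero integrable
function, then `f(x) = (1/p(x)) ∫_a^x η(u)p(u)du` satisfies:
(i) `f·p` is locally absolutely continuous on `S` with derivative `η·p` a.e.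
(so `T_p f = η` a.e. on `S`); (ii) `f·p → 0` at both endpoints of `S`, and
`E[T_p f(X)] = 0`. -/
theorem representation_formula_I_continuous
    (p η : ℝ → ℝ) (a b : EReal) (hab : a < b)
    (hpmeas : Measurable p) (hp0 : ∀ x, 0 ≤ p x)
    (hppos : ∀ x : ℝ, 0 < p x ↔ a < (x : EReal) ∧ (x : EReal) < b)
    (hp1 : ∫ x, p x = 1)
    (hηmeas : Measurable η)
    (hηint : Integrable (fun x => η x * p x))
    (hηmean : ∫ x, η x * p x = 0)
    (f : ℝ → ℝ)
    (hf : ∀ x, f x = (∫ u in Iio x, η u * p u) / p x) :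
    (∀ x : ℝ, a < (x : EReal) ∧ (x : EReal) < b →
      ∀ y : ℝ, a < (y : EReal) ∧ (y : EReal) < b →
        f y * p y - f x * p x = ∫ t in x..y, η t * p t) ∧
    (∀ᵐ x ∂(volume.restrict {x : ℝ | a < (x : EReal) ∧ (x : EReal) < b}),
      HasDerivAt (fun y => f y * p y) (η x * p x) x) ∧
    Tendsto (fun x : ℝ => f x * p x)
      (Filter.comap (fun x : ℝ => (x : EReal)) (nhdsWithin a (Ioi a))) (nhds 0) ∧
    Tendsto (fun x : ℝ => f x * p x)
      (Filter.comap (fun x : ℝ => (x : EReal)) (nhdsWithin b (Iio b))) (nhds 0) ∧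
    ∫ x in {x : ℝ | a < (x : EReal) ∧ (x : EReal) < b}, η x * p x = 0 := by
  set g : ℝ → ℝ := fun t => η t * p t with hg
  set S : Set ℝ := {x : ℝ | a < (x : EReal) ∧ (x : EReal) < b} with hS
  have hSopen : IsOpen S := by
    have : S = (fun x : ℝ => (x : EReal)) ⁻¹' (Ioo a b) := rfl
    rw [this]
    exact (isOpen_Ioo).preimage continuous_coe_real_ereal
  have hpz : ∀ x : ℝ, x ∉ S → p x = 0 := by
    intro x hx
    rcases (hp0 x).eq_or_lt with h | h
    · exact h.symm
    · exact absurd ((hppos x).1 h) hx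
  have hgz : ∀ x : ℝ, x ∉ S → g x = 0 := fun x hx => by
    simp [hg, hpz x hx]
  have hfpF : ∀ x : ℝ, x ∈ S → f x * p x = ∫ t in Iio x, g t := by
    intro x hx
    rw [hf x]
    exact div_mul_cancel₀ _ (ne_of_gt ((hppos x).2 hx))
  have hFF : ∀ u v : ℝ, (∫ t in Iio v, g t) - (∫ t in Iio u, g t) = ∫ t in u..v, g t := by
    intro u v
    rw [← integral_Iic_eq_integral_Iio, ← integral_Iic_eq_integral_Iio]
    exact intervalIntegral.integral_Iic_sub_Iic hηint.integrableOn hηint.integrableOn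
  have hgmeas : Measurable g := hηmeas.mul hpmeas
  refine ⟨?_, ?_, ?_, ?_, ?_⟩
  · intro x hx y hy
    rw [hfpF x hx, hfpF y hy, hFF]
  · filter_upwards [ae_restrict_of_ae (ae_hasDerivAt_primitive g hηint),
      ae_restrict_mem hSopen.measurableSet] with x hx hxS
    refine hx.congr_of_eventuallyEq ?_
    filter_upwards [hSopen.mem_nhds hxS] with y hyS
    exact hfpF y hyS
  · -- limit at a
    set L := Filter.comap (fun x : ℝ => (x : EReal)) (nhdsWithin a (Ioi a)) with hL
    have hmemS : ∀ᶠ x : ℝ in L, x ∈ S := by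
      have h1 : {x : ℝ | a < (x : EReal)} ∈ L :=
        preimage_mem_comap self_mem_nhdsWithin
      have h2 : {x : ℝ | (x : EReal) < b} ∈ L :=
        preimage_mem_comap (nhdsWithin_le_nhds (Iio_mem_nhds hab))
      filter_upwards [h1, h2] with x hx1 hx2
      exact ⟨hx1, hx2⟩
    have hFtend : Tendsto (fun x : ℝ => ∫ t in Iio x, g t) L (nhds 0) := by
      have h0 : (0 : ℝ) = ∫ t : ℝ, (0 : ℝ) := by simp
      rw [h0]
      have := tendsto_integral_filter_of_dominated_convergence (μ := volume)
        (F := fun x : ℝ => (Iio x).indicator g) (f := fun _ : ℝ => (0:ℝ)) (l := L)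
        (fun t => |g t|)
        (Eventually.of_forall fun x =>
          ((hgmeas.indicator measurableSet_Iio).aestronglyMeasurable))
        (Eventually.of_forall fun x => Eventually.of_forall fun t =>
          norm_indicator_le_norm_self g t)
        hηint.abs
        ?_
      · refine Tendsto.congr (fun x => ?_) this
        rw [integral_indicator measurableSet_Iio]
      · refine Eventually.of_forall fun t => ?_
        by_cases hta : a < (t : EReal)
        · have hmem : {x : ℝ | (x : EReal) < (t : EReal)} ∈ L :=
            preimage_mem_comap (nhdsWithin_le_nhds (Iio_mem_nhds hta))
          have heq : (fun x : ℝ => (Iio x).indicator g t) =ᶠ[L] fun _ => (0:ℝ) := by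
            filter_upwards [hmem] with x hx
            have hxt : x < t := by exact_mod_cast hx
            simp [indicator_of_notMem, mem_Iio, not_lt.mpr hxt.le]
          exact Tendsto.congr' heq.symm tendsto_const_nhds
        · have hgt : g t = 0 := hgz t (fun h => hta h.1)
          have : ∀ x : ℝ, (Iio x).indicator g t = 0 := fun x => by
            by_cases h : t ∈ Iio x <;> simp [h, hgt]
          simpa only [this] using (tendsto_const_nhds : Tendsto (fun _ : ℝ => (0:ℝ)) L (nhds 0))
    refine hFtend.congr' ?_
    filter_upwards [hmemS] with x hx
    exact (hfpF x hx).symm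
  · -- limit at b
    set L := Filter.comap (fun x : ℝ => (x : EReal)) (nhdsWithin b (Iio b)) with hL
    have hmemS : ∀ᶠ x : ℝ in L, x ∈ S := by
      have h1 : {x : ℝ | (x : EReal) < b} ∈ L :=
        preimage_mem_comap self_mem_nhdsWithin
      have h2 : {x : ℝ | a < (x : EReal)} ∈ L :=
        preimage_mem_comap (nhdsWithin_le_nhds (Ioi_mem_nhds hab))
      filter_upwards [h2, h1] with x hx1 hx2
      exact ⟨hx1, hx2⟩
    have hFtend : Tendsto (fun x : ℝ => ∫ t in Iio x, g t) L (nhds 0) := by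
      rw [← hηmean]
      have := tendsto_integral_filter_of_dominated_convergence (μ := volume)
        (F := fun x : ℝ => (Iio x).indicator g) (f := g) (l := L)
        (fun t => |g t|)
        (Eventually.of_forall fun x =>
          ((hgmeas.indicator measurableSet_Iio).aestronglyMeasurable))
        (Eventually.of_forall fun x => Eventually.of_forall fun t =>
          norm_indicator_le_norm_self g t)
        hηint.abs
        ?_
      · refine Tendsto.congr (fun x => ?_) this
        rw [integral_indicator measurableSet_Iio]
      · refine Eventually.of_forall fun t => ?_
        by_cases htb : (t : EReal) < b
        · have hmem : {x : ℝ | (t : EReal) < (x : EReal)} ∈ L :=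
            preimage_mem_comap (nhdsWithin_le_nhds (Ioi_mem_nhds htb))
          have heq : (fun x : ℝ => (Iio x).indicator g t) =ᶠ[L] fun _ => g t := by
            filter_upwards [hmem] with x hx
            have hxt : t < x := by exact_mod_cast hx
            simp [indicator_of_mem, mem_Iio, hxt]
          exact Tendsto.congr' heq.symm tendsto_const_nhds
        · have hgt : g t = 0 := hgz t (fun h => htb h.2)
          have : ∀ x : ℝ, (Iio x).indicator g t = 0 := fun x => by
            by_cases h : t ∈ Iio x <;> simp [h, hgt]
          rw [hgt]
          simpa only [this] using (tendsto_const_nhds : Tendsto (fun _ : ℝ => (0:ℝ)) L (nhds 0))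
    refine hFtend.congr' ?_
    filter_upwards [hmemS] with x hx
    exact (hfpF x hx).symm
  · rw [setIntegral_eq_integral_of_forall_compl_eq_zero (fun x hx => hgz x hx)]
    exact hηmean
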